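/- Continuity in the state: let K be a compact convex set, D a distance on K satisfying the triangle inequality and convexity in the first argument, and E : K → ℝ≥0 convex and bounded by M. Then for any ε > 0 and states ρ₁, ρ₂ with η = D(ρ₁,ρ₂), one has |E_ε(ρ₂) − E_ε(ρ₁)| ≤ (η/(ε+η))·M. In particular ρ ↦ E_ε(ρ) is continuous for every fixed ε > 0, even if E itself is discontinuous. -/

import Mathlib

lemma stmt5_aux {V : Type*} [NormedAddCommGroup V] [NormedSpace ℝ V]
    (K : Set V) (hKc : Convex ℝ K)
    (D : V → V → ℝ) (hDnn : ∀ ρ σ, 0 ≤ D ρ σ)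
    (hDsymm : ∀ ρ σ, D ρ σ = D σ ρ)
    (hDtri : ∀ ρ σ τ, D ρ τ ≤ D ρ σ + D σ τ)
    (hDconv : ∀ ρ ∈ K, ∀ σ ∈ K, ∀ p : ℝ, 0 ≤ p → p ≤ 1 →
      D (p • σ + (1 - p) • ρ) ρ ≤ p * D σ ρ)
    (E : V → ℝ) (hEnn : ∀ σ ∈ K, 0 ≤ E σ)
    (hEconv : ∀ σ₁ ∈ K, ∀ σ₂ ∈ K, ∀ p : ℝ, 0 ≤ p → p ≤ 1 →
      E (p • σ₁ + (1 - p) • σ₂) ≤ p * E σ₁ + (1 - p) * E σ₂)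
    (M : ℝ) (hM : ∀ σ ∈ K, E σ ≤ M)
    (ε : ℝ) (hε : 0 < ε)
    (Eeps : V → ℝ)
    (hEeps : ∀ ρ ∈ K, IsLeast (E '' {σ ∈ K | D ρ σ ≤ ε}) (Eeps ρ))
    (ρ₁ : V) (hρ₁ : ρ₁ ∈ K) (ρ₂ : V) (hρ₂ : ρ₂ ∈ K) :
    Eeps ρ₂ - Eeps ρ₁ ≤ (D ρ₁ ρ₂ / (ε + D ρ₁ ρ₂)) * M := by
  set η := D ρ₁ ρ₂ with hηdef
  have hη : 0 ≤ η := hDnn _ _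
  have hden : 0 < ε + η := by linarith
  set p := η / (ε + η) with hpdef
  have hp0 : 0 ≤ p := div_nonneg hη hden.le
  have hp1 : p ≤ 1 := by
    rw [hpdef, div_le_one hden]; linarith
  obtain ⟨⟨σ₁, ⟨hσ₁K, hσ₁D⟩, hσ₁E⟩, _⟩ := hEeps ρ₁ hρ₁
  have hq0 : (0:ℝ) ≤ 1 - p := by linarith
  have hq1 : (1:ℝ) - p ≤ 1 := by linarith
  set σ' := (1 - p) • σ₁ + (1 - (1 - p)) • ρ₂ with hσ'def
  have hσ'K : σ' ∈ K := hKc hσ₁K hρ₂ hq0 (by linarith) (by ring)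
  have hDσ' : D σ' ρ₂ ≤ (1 - p) * D σ₁ ρ₂ := hDconv ρ₂ hρ₂ σ₁ hσ₁K (1 - p) hq0 hq1
  have hDfeas : D ρ₂ σ' ≤ ε := by
    rw [hDsymm]
    have h1 : D σ₁ ρ₂ ≤ ε + η := by
      have := hDtri σ₁ ρ₁ ρ₂
      have h2 : D σ₁ ρ₁ ≤ ε := by rw [hDsymm]; exact hσ₁D
      linarith
    have h3 : (1 - p) * D σ₁ ρ₂ ≤ (1 - p) * (ε + η) := by
      exact mul_le_mul_of_nonneg_left h1 hq0
    have h4 : (1 - p) * (ε + η) = ε := by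
      rw [hpdef]; field_simp; ring
    linarith
  have hE1 : Eeps ρ₂ ≤ E σ' :=
    (hEeps ρ₂ hρ₂).2 ⟨σ', ⟨hσ'K, hDfeas⟩, rfl⟩
  have hE2 : E σ' ≤ (1 - p) * E σ₁ + (1 - (1 - p)) * E ρ₂ :=
    hEconv σ₁ hσ₁K ρ₂ hρ₂ (1 - p) hq0 hq1
  have hEρ₂M : E ρ₂ ≤ M := hM ρ₂ hρ₂
  have hσ₁nn : 0 ≤ E σ₁ := hEnn σ₁ hσ₁K
  have : Eeps ρ₁ = E σ₁ := hσ₁E.symm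
  nlinarith [mul_le_mul_of_nonneg_left hEρ₂M hp0]

/-- Continuity in the state: for ε > 0 and η = D(ρ₁,ρ₂),
`|E_ε(ρ₂) − E_ε(ρ₁)| ≤ (η/(ε+η))·M`, where `M` bounds `E` on `K`. -/
theorem stmt5 {V : Type*} [NormedAddCommGroup V] [NormedSpace ℝ V]
    (K : Set V) (hK : IsCompact K) (hKc : Convex ℝ K)
    (D : V → V → ℝ) (hDnn : ∀ ρ σ, 0 ≤ D ρ σ) (hD0 : ∀ ρ σ, D ρ σ = 0 ↔ ρ = σ)
    (hDsymm : ∀ ρ σ, D ρ σ = D σ ρ)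
    (hDtri : ∀ ρ σ τ, D ρ τ ≤ D ρ σ + D σ τ)
    (hDconv : ∀ ρ ∈ K, ∀ σ ∈ K, ∀ p : ℝ, 0 ≤ p → p ≤ 1 →
      D (p • σ + (1 - p) • ρ) ρ ≤ p * D σ ρ)
    (E : V → ℝ) (hEnn : ∀ σ ∈ K, 0 ≤ E σ)
    (hEconv : ∀ σ₁ ∈ K, ∀ σ₂ ∈ K, ∀ p : ℝ, 0 ≤ p → p ≤ 1 →
      E (p • σ₁ + (1 - p) • σ₂) ≤ p * E σ₁ + (1 - p) * E σ₂)
    (M : ℝ) (hM : ∀ σ ∈ K, E σ ≤ M)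
    (ε : ℝ) (hε : 0 < ε)
    (Eeps : V → ℝ)
    (hEeps : ∀ ρ ∈ K, IsLeast (E '' {σ ∈ K | D ρ σ ≤ ε}) (Eeps ρ))
    (ρ₁ : V) (hρ₁ : ρ₁ ∈ K) (ρ₂ : V) (hρ₂ : ρ₂ ∈ K) :
    |Eeps ρ₂ - Eeps ρ₁| ≤ (D ρ₁ ρ₂ / (ε + D ρ₁ ρ₂)) * M := by
  rw [abs_sub_le_iff]
  constructor
  · exact stmt5_aux K hKc D hDnn hDsymm hDtri hDconv E hEnn hEconv M hM ε hε Eeps hEeps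
      ρ₁ hρ₁ ρ₂ hρ₂
  · have := stmt5_aux K hKc D hDnn hDsymm hDtri hDconv E hEnn hEconv M hM ε hε Eeps hEeps
      ρ₂ hρ₂ ρ₁ hρ₁
    rwa [hDsymm ρ₂ ρ₁] at this
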